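/- The number of strong realizations in ℙ³(𝔽_q) of the 6-point configuration with full lines 𝓛 = {{0,1,2},{3,4,5}} and full planes 𝓗 = {{0,1,2,3},{0,1,2,4},{0,1,2,5},{0,3,4,5},{1,3,4,5},{2,3,4,5}} is A₆(4,q) = (q²+q+1)(q²+1)(q+1)²(q−1)²·q⁶. -/

import Mathlib

/-- A set of points of `ℙ³(F)` (the projectivization of `F⁴`) is collinear if
representative vectors of the points span a subspace of `F⁴` of dimension at most 2. -/
def IsCollinearSet (F : Type*) [Field F] (S : Set (Projectivization F (Fin 4 → F))) : Prop :=
  Module.finrank F (Submodule.span F (Projectivization.rep '' S)) ≤ 2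

/-- A set of points of `ℙ³(F)` is coplanar if representative vectors of the points span a
subspace of `F⁴` of dimension at most 3. -/
def IsCoplanarSet (F : Type*) [Field F] (S : Set (Projectivization F (Fin 4 → F))) : Prop :=
  Module.finrank F (Submodule.span F (Projectivization.rep '' S)) ≤ 3

/-- A strong realization in `ℙ³(F)` of a configuration on the point set `Fin n` with
collection `L` of full lines and collection `H` of full planes is an injective map
`σ : Fin n → ℙ³(F)` such that a 3-element subset `T` maps to a collinear set exactly when
`T` is contained in a member of `L`, and a 4-element subset `S` maps to a coplanar set
exactly when `S` is contained in a member of `H`. -/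
def IsStrongRealization (F : Type*) [Field F] {n : ℕ} (L H : Finset (Finset (Fin n)))
    (σ : Fin n → Projectivization F (Fin 4 → F)) : Prop :=
  Function.Injective σ ∧
    (∀ T : Finset (Fin n), T.card = 3 →
      (IsCollinearSet F (σ '' ↑T) ↔ ∃ l ∈ L, T ⊆ l)) ∧
    (∀ S : Finset (Fin n), S.card = 4 →
      (IsCoplanarSet F (σ '' ↑S) ↔ ∃ h ∈ H, S ⊆ h))


open Module Submodule

namespace StrongRealAux

variable {F : Type*} [Field F]

abbrev Pt (F : Type*) [Field F] := Projectivization F (Fin 4 → F)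

section geom
variable {V : Type*} [AddCommGroup V] [Module F V]

lemma rep_mem_span_singleton_iff (p p' : Projectivization F V) :
    p.rep ∈ (F ∙ p'.rep) ↔ p = p' := by
  rw [Submodule.mem_span_singleton]
  constructor
  · rintro ⟨a, ha⟩
    rw [← p.mk_rep, ← p'.mk_rep, Projectivization.mk_eq_mk_iff']
    exact ⟨a, ha⟩
  · rintro rfl; exact ⟨1, one_smul _ _⟩

lemma finrank_sup_singleton {W : Submodule F V} [FiniteDimensional F W] {v : V} (hv : v ∉ W) :
    finrank F ↥(W ⊔ (F ∙ v)) = finrank F W + 1 := by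
  have hv0 : v ≠ 0 := fun h => hv (h ▸ W.zero_mem)
  have hbot : W ⊓ (F ∙ v) = ⊥ := by
    rw [eq_bot_iff]
    intro x hx
    rw [Submodule.mem_inf, Submodule.mem_span_singleton] at hx
    obtain ⟨hxW, a, rfl⟩ := hx
    rcases eq_or_ne a 0 with rfl | ha
    · simp
    · exact absurd (by simpa [smul_smul, inv_mul_cancel₀ ha] using W.smul_mem a⁻¹ hxW) hv
  have h := Submodule.finrank_sup_add_finrank_inf_eq W (F ∙ v)
  rw [hbot, finrank_bot, finrank_span_singleton hv0] at h
  omega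

lemma finrank_span_pair {x y : V} (hx : x ≠ 0) (hy : y ∉ (F ∙ x)) :
    finrank F ↥(span F {x, y}) = 2 := by
  rw [show ({x, y} : Set V) = insert x {y} from rfl, span_insert]
  rw [show (span F ({y} : Set V)) = F ∙ y from rfl]
  rw [finrank_sup_singleton hy, finrank_span_singleton hx]

lemma finrank_span_pair_rep {p p' : Projectivization F V} (h : p' ≠ p) :
    finrank F ↥(span F {p.rep, p'.rep}) = 2 :=
  finrank_span_pair p.rep_nonzero (fun hm => h ((rep_mem_span_singleton_iff _ _).1 hm))

lemma span_pair_eq [FiniteDimensional F V] {W : Submodule F V} (hW : finrank F W = 2)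
    {x y : Projectivization F V} (hx : x.rep ∈ W) (hy : y.rep ∈ W) (hxy : y ≠ x) :
    span F {x.rep, y.rep} = W := by
  refine Submodule.eq_of_le_of_finrank_le (span_le.2 ?_) ?_
  · intro v hv
    rcases hv with rfl | rfl
    · exact hx
    · exact hy
  · rw [finrank_span_pair_rep hxy, hW]

end geom


instance finiteProj {V : Type*} [AddCommGroup V] [Module F V] [Finite V] :
    Finite (Projectivization F V) := by
  unfold Projectivization; exact Quotient.finite _

lemma ncard_sigma_const {A : Type*} [Finite A] {B : A → Type*} [∀ a, Finite (B a)] {c : ℕ}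
    (h : ∀ a, Nat.card (B a) = c) : Nat.card (Σ a, B a) = Nat.card A * c := by
  classical
  cases nonempty_fintype A
  letI : ∀ a, Fintype (B a) := fun a => Fintype.ofFinite _
  rw [Nat.card_eq_fintype_card, Nat.card_eq_fintype_card, Fintype.card_sigma]
  rw [Finset.sum_congr rfl (fun a _ => by rw [← Nat.card_eq_fintype_card, h a])]
  rw [Finset.sum_const, Finset.card_univ, smul_eq_mul]

lemma ncard_ne_zero {V : Type*} [AddCommGroup V] [Finite V] [Nontrivial V] :
    Nat.card {v : V // v ≠ 0} = Nat.card V - 1 := by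
  classical
  cases nonempty_fintype V
  rw [Nat.card_eq_fintype_card, Nat.card_eq_fintype_card]
  have : Fintype.card {v : V // ¬ v = 0} = Fintype.card V - Fintype.card {v : V // v = 0} :=
    Fintype.card_subtype_compl _
  simpa [Fintype.card_subtype_eq (0 : V)] using this

lemma card_projectivization_mul (V : Type*) [AddCommGroup V] [Module F V] [Finite V]
    [Fintype F] :
    Nat.card (Projectivization F V) * (Fintype.card F - 1) = Nat.card V - 1 := by
  classical
  rcases subsingleton_or_nontrivial V with hV | hV
  · have h1 : Nat.card V = 1 := Nat.card_unique
    have h2 : IsEmpty (Projectivization F V) := by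
      constructor; intro p; exact p.rep_nonzero (Subsingleton.elim _ _)
    rw [Nat.card_of_isEmpty, h1]; simp
  · have e1 : {v : V // v ≠ 0} ≃
        Σ p : Projectivization F V, {v : {v : V // v ≠ 0} // Projectivization.mk' F v = p} :=
      (Equiv.sigmaFiberEquiv _).symm
    have e2 : ∀ p : Projectivization F V,
        Nat.card {v : {v : V // v ≠ 0} // Projectivization.mk' F v = p}
          = Fintype.card F - 1 := by
      intro p
      have e3 : Fˣ ≃ {v : {v : V // v ≠ 0} // Projectivization.mk' F v = p} := by
        refine Equiv.ofBijective (fun a =>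
          ⟨⟨a • p.rep, by simp [smul_ne_zero, p.rep_nonzero, Units.smul_def]⟩, ?_⟩) ⟨?_, ?_⟩
        · rw [Projectivization.mk'_eq_mk]
          conv_rhs => rw [← p.mk_rep]
          rw [Projectivization.mk_eq_mk_iff]
          exact ⟨a, rfl⟩
        · intro a b hab
          have h1 : (a : F) • p.rep = (b : F) • p.rep := by
            have := congrArg (fun x => (x.1 : V)) hab
            simpa [Units.smul_def] using this
          exact Units.ext (smul_left_injective F p.rep_nonzero h1)
        · rintro ⟨⟨v, hv⟩, hp⟩
          rw [Projectivization.mk'_eq_mk] at hp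
          rw [← p.mk_rep, Projectivization.mk_eq_mk_iff] at hp
          obtain ⟨a, ha⟩ := hp
          exact ⟨a, Subtype.ext (Subtype.ext ha)⟩
      rw [← Nat.card_congr e3, Nat.card_eq_fintype_card, Fintype.card_units]
    rw [← ncard_sigma_const e2, ← Nat.card_congr e1, ncard_ne_zero]


section specific
variable [Fintype F] {V : Type*} [AddCommGroup V] [Module F V] [Finite V]

lemma card_module (n : ℕ) (h : finrank F V = n) : Nat.card V = Fintype.card F ^ n := by
  classical
  cases nonempty_fintype V
  rw [Nat.card_eq_fintype_card, card_eq_pow_finrank (K := F), h]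

lemma card_proj_of_finrank {n : ℕ} (N : ℕ → ℕ) (h : finrank F V = n)
    (hN : ∀ q : ℕ, 2 ≤ q → N q * (q - 1) = q ^ n - 1) :
    Nat.card (Projectivization F V) = N (Fintype.card F) := by
  have hq2 : 2 ≤ Fintype.card F := Fintype.one_lt_card
  have key := card_projectivization_mul (F := F) V
  rw [card_module n h] at key
  rw [← hN _ hq2] at key
  exact Nat.eq_of_mul_eq_mul_right (by omega) key

/-- The subtype of points of `ℙ F V` whose representative lies in `W` is equivalent
to `ℙ F W`. -/
noncomputable def lineEquiv (W : Submodule F V) :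
    Projectivization F W ≃ {p : Projectivization F V // p.rep ∈ W} := by
  refine Equiv.ofBijective (fun x => ⟨Projectivization.map W.subtype W.injective_subtype x, ?_⟩)
    ⟨?_, ?_⟩
  · induction x using Projectivization.ind with
    | h v hv =>
      rw [Projectivization.map_mk]
      obtain ⟨a, ha⟩ := Projectivization.exists_smul_eq_mk_rep F (W.subtype v)
        (by simpa using fun h => hv (Subtype.ext h))
      rw [← ha]
      exact W.smul_mem _ v.2
  · intro x y hxy
    exact Projectivization.map_injective W.subtype Subtype.val_injective
      (congrArg Subtype.val hxy)
  · rintro ⟨p, hp⟩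
    refine ⟨Projectivization.mk F (⟨p.rep, hp⟩ : W)
      (fun h => p.rep_nonzero (congrArg Subtype.val h)), ?_⟩
    apply Subtype.ext
    simp only [Projectivization.map_mk]
    exact p.mk_rep

lemma card_line {W : Submodule F V} (hW : finrank F W = 2) :
    Nat.card {p : Projectivization F V // p.rep ∈ W} = Fintype.card F + 1 := by
  rw [← Nat.card_congr (lineEquiv W)]
  exact card_proj_of_finrank (fun q => q + 1) hW (fun q hq => by
    obtain ⟨k, rfl⟩ : ∃ k, q = k + 1 := ⟨q - 1, by omega⟩
    simp only [Nat.add_sub_cancel]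
    apply Nat.eq_sub_of_add_eq
    ring)

lemma card_plane {W : Submodule F V} (hW : finrank F W = 3) :
    Nat.card {p : Projectivization F V // p.rep ∈ W}
      = Fintype.card F ^ 2 + Fintype.card F + 1 := by
  rw [← Nat.card_congr (lineEquiv W)]
  exact card_proj_of_finrank (fun q => q ^ 2 + q + 1) hW (fun q hq => by
    obtain ⟨k, rfl⟩ : ∃ k, q = k + 1 := ⟨q - 1, by omega⟩
    simp only [Nat.add_sub_cancel]
    apply Nat.eq_sub_of_add_eq
    ring)

lemma card_proj_ambient (h : finrank F V = 4) :
    Nat.card (Projectivization F V)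
      = Fintype.card F ^ 3 + Fintype.card F ^ 2 + Fintype.card F + 1 :=
  card_proj_of_finrank (fun q => q ^ 3 + q ^ 2 + q + 1) h (fun q hq => by
    obtain ⟨k, rfl⟩ : ∃ k, q = k + 1 := ⟨q - 1, by omega⟩
    simp only [Nat.add_sub_cancel]
    apply Nat.eq_sub_of_add_eq
    ring)

lemma card_compl {W : Submodule F V} :
    Nat.card {p : Projectivization F V // p.rep ∉ W}
      = Nat.card (Projectivization F V) - Nat.card {p : Projectivization F V // p.rep ∈ W} := by
  classical
  cases nonempty_fintype (Projectivization F V)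
  simp only [Nat.card_eq_fintype_card]
  exact Fintype.card_subtype_compl _

lemma card_remove_two {α : Type*} [Finite α] {a b : α} (h : a ≠ b) :
    Nat.card {x : α // x ≠ a ∧ x ≠ b} = Nat.card α - 2 := by
  classical
  cases nonempty_fintype α
  simp only [Nat.card_eq_fintype_card]
  rw [Fintype.card_subtype]
  have : Finset.filter (fun x => x ≠ a ∧ x ≠ b) Finset.univ = Finset.univ \ {a, b} := by
    ext x; simp [and_comm]
  rw [this, Finset.card_sdiff_of_subset (Finset.subset_univ _), Finset.card_univ]
  congr 1
  rw [Finset.card_insert_of_notMem (by simpa using h), Finset.card_singleton]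

lemma card_ne_subtype {α : Type*} [Finite α] (a : α) :
    Nat.card {x : α // x ≠ a} = Nat.card α - 1 := by
  classical
  cases nonempty_fintype α
  simp only [Nat.card_eq_fintype_card]
  have : Fintype.card {x : α // ¬ x = a} = Fintype.card α - Fintype.card {x : α // x = a} :=
    Fintype.card_subtype_compl _
  simpa [Fintype.card_subtype_eq a] using this

/-- Equivalence for the "two points removed from a line" subtype. -/
def removeTwoEquiv {α : Type*} {P : α → Prop} {a b : α} (ha : P a) (hb : P b) :
    {p : α // P p ∧ p ≠ a ∧ p ≠ b} ≃ {x : {p : α // P p} // x ≠ ⟨a, ha⟩ ∧ x ≠ ⟨b, hb⟩} where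
  toFun p := ⟨⟨p.1, p.2.1⟩, fun h => p.2.2.1 (congrArg Subtype.val h),
    fun h => p.2.2.2 (congrArg Subtype.val h)⟩
  invFun x := ⟨x.1.1, x.1.2, fun h => x.2.1 (Subtype.ext h), fun h => x.2.2 (Subtype.ext h)⟩
  left_inv p := rfl
  right_inv x := rfl

lemma card_line_remove_two {W : Submodule F V} (hW : finrank F W = 2)
    {a b : Projectivization F V} (ha : a.rep ∈ W) (hb : b.rep ∈ W) (hab : a ≠ b) :
    Nat.card {p : Projectivization F V // p.rep ∈ W ∧ p ≠ a ∧ p ≠ b}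
      = Fintype.card F - 1 := by
  rw [Nat.card_congr (removeTwoEquiv (P := fun p : Projectivization F V => p.rep ∈ W) ha hb), card_remove_two
    (fun h => hab (congrArg Subtype.val h)), card_line hW]
  have : 2 ≤ Fintype.card F := Fintype.one_lt_card
  omega

end specific


section colcop

lemma isCollinear_of {S : Set (Projectivization F (Fin 4 → F))} {W : Submodule F (Fin 4 → F)}
    (hW : finrank F W ≤ 2) (h : ∀ p ∈ S, Projectivization.rep p ∈ W) :
    IsCollinearSet F S := by
  have hle : span F (Projectivization.rep '' S) ≤ W := by
    rw [span_le]; rintro v ⟨p, hp, rfl⟩; exact h p hp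
  exact le_trans (Submodule.finrank_mono hle) hW

lemma isCoplanar_of {S : Set (Projectivization F (Fin 4 → F))} {W : Submodule F (Fin 4 → F)}
    (hW : finrank F W ≤ 3) (h : ∀ p ∈ S, Projectivization.rep p ∈ W) :
    IsCoplanarSet F S := by
  have hle : span F (Projectivization.rep '' S) ≤ W := by
    rw [span_le]; rintro v ⟨p, hp, rfl⟩; exact h p hp
  exact le_trans (Submodule.finrank_mono hle) hW

lemma not_isCollinear {S : Set (Projectivization F (Fin 4 → F))}
    {x y z : Projectivization F (Fin 4 → F)} (hxS : x ∈ S) (hyS : y ∈ S) (hzS : z ∈ S)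
    {W W' : Submodule F (Fin 4 → F)} (hW : finrank F W = 2) (hdisj : W ⊓ W' = ⊥)
    (hx : x.rep ∈ W) (hy : y.rep ∈ W) (hz : z.rep ∈ W') (hxy : y ≠ x) :
    ¬ IsCollinearSet F S := by
  intro hcol
  have hle : W ≤ span F (Projectivization.rep '' S) := by
    rw [← span_pair_eq hW hx hy hxy]
    exact span_mono (by rintro v (rfl | rfl); exacts [⟨x, hxS, rfl⟩, ⟨y, hyS, rfl⟩])
  have heq : W = span F (Projectivization.rep '' S) :=
    Submodule.eq_of_le_of_finrank_le hle (le_trans hcol (by omega))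
  have hzW : z.rep ∈ W := heq ▸ subset_span ⟨z, hzS, rfl⟩
  have : z.rep ∈ W ⊓ W' := ⟨hzW, hz⟩
  rw [hdisj, Submodule.mem_bot] at this
  exact z.rep_nonzero this

lemma not_isCoplanar {S : Set (Projectivization F (Fin 4 → F))}
    {x y z w : Projectivization F (Fin 4 → F)}
    (hxS : x ∈ S) (hyS : y ∈ S) (hzS : z ∈ S) (hwS : w ∈ S)
    {W W' : Submodule F (Fin 4 → F)} (hW : finrank F W = 2) (hW' : finrank F W' = 2)
    (hsup : W ⊔ W' = ⊤)
    (hx : x.rep ∈ W) (hy : y.rep ∈ W) (hz : z.rep ∈ W') (hw : w.rep ∈ W')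
    (hxy : y ≠ x) (hzw : w ≠ z) : ¬ IsCoplanarSet F S := by
  intro hcop
  have h1 : W ≤ span F (Projectivization.rep '' S) := by
    rw [← span_pair_eq hW hx hy hxy]
    exact span_mono (by rintro v (rfl | rfl); exacts [⟨x, hxS, rfl⟩, ⟨y, hyS, rfl⟩])
  have h2 : W' ≤ span F (Projectivization.rep '' S) := by
    rw [← span_pair_eq hW' hz hw hzw]
    exact span_mono (by rintro v (rfl | rfl); exacts [⟨z, hzS, rfl⟩, ⟨w, hwS, rfl⟩])
  have htop : span F (Projectivization.rep '' S) = ⊤ :=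
    top_le_iff.1 (hsup ▸ sup_le h1 h2)
  rw [IsCoplanarSet, htop, finrank_top, Module.finrank_fin_fun] at hcop
  omega

end colcop


/-- The "line through two points" as a submodule. -/
abbrev Wp (x y : Projectivization F (Fin 4 → F)) : Submodule F (Fin 4 → F) :=
  span F {x.rep, y.rep}

/-- Sequential form of the conditions defining a strong realization of the configuration. -/
def Cond (σ : Fin 6 → Projectivization F (Fin 4 → F)) : Prop :=
  σ 1 ≠ σ 0 ∧
  ((σ 2).rep ∈ Wp (σ 0) (σ 1) ∧ σ 2 ≠ σ 0 ∧ σ 2 ≠ σ 1) ∧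
  (σ 3).rep ∉ Wp (σ 0) (σ 1) ∧
  (σ 4).rep ∉ Wp (σ 0) (σ 1) ⊔ (F ∙ (σ 3).rep) ∧
  ((σ 5).rep ∈ Wp (σ 3) (σ 4) ∧ σ 5 ≠ σ 3 ∧ σ 5 ≠ σ 4)

lemma realization_iff_cond (σ : Fin 6 → Projectivization F (Fin 4 → F)) :
    IsStrongRealization F
      ({{0, 1, 2}, {3, 4, 5}} : Finset (Finset (Fin 6)))
      ({{0, 1, 2, 3}, {0, 1, 2, 4}, {0, 1, 2, 5},
        {0, 3, 4, 5}, {1, 3, 4, 5}, {2, 3, 4, 5}} : Finset (Finset (Fin 6))) σ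
      ↔ Cond σ := by
  constructor
  · rintro ⟨inj, h3, h4⟩
    have h10 : σ 1 ≠ σ 0 := inj.ne (by decide)
    have h20 : σ 2 ≠ σ 0 := inj.ne (by decide)
    have h21 : σ 2 ≠ σ 1 := inj.ne (by decide)
    have h43 : σ 4 ≠ σ 3 := inj.ne (by decide)
    have h53 : σ 5 ≠ σ 3 := inj.ne (by decide)
    have h54 : σ 5 ≠ σ 4 := inj.ne (by decide)
    have hW1 : finrank F (Wp (σ 0) (σ 1)) = 2 := finrank_span_pair_rep h10
    have hW2 : finrank F (Wp (σ 3) (σ 4)) = 2 := finrank_span_pair_rep h43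
    have h0W : (σ 0).rep ∈ Wp (σ 0) (σ 1) := subset_span (by simp)
    have h1W : (σ 1).rep ∈ Wp (σ 0) (σ 1) := subset_span (by simp)
    have h3W2 : (σ 3).rep ∈ Wp (σ 3) (σ 4) := subset_span (by simp)
    have h4W2 : (σ 4).rep ∈ Wp (σ 3) (σ 4) := subset_span (by simp)
    -- σ 2 lies on the first line
    have hcol012 : IsCollinearSet F (σ '' ↑({0, 1, 2} : Finset (Fin 6))) :=
      (h3 {0, 1, 2} (by decide)).2 ⟨{0, 1, 2}, by decide, by decide⟩
    have h2W : (σ 2).rep ∈ Wp (σ 0) (σ 1) := by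
      have hle : Wp (σ 0) (σ 1)
          ≤ span F (Projectivization.rep '' (σ '' ↑({0, 1, 2} : Finset (Fin 6)))) := by
        apply span_mono
        rintro v (rfl | rfl)
        · exact ⟨σ 0, ⟨0, by simp, rfl⟩, rfl⟩
        · exact ⟨σ 1, ⟨1, by simp, rfl⟩, rfl⟩
      have heq := Submodule.eq_of_le_of_finrank_le hle (le_trans hcol012 (by rw [hW1]))
      rw [heq]
      exact subset_span ⟨σ 2, ⟨2, by simp, rfl⟩, rfl⟩
    -- σ 5 lies on the second line
    have hcol345 : IsCollinearSet F (σ '' ↑({3, 4, 5} : Finset (Fin 6))) :=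
      (h3 {3, 4, 5} (by decide)).2 ⟨{3, 4, 5}, by decide, by decide⟩
    have h5W : (σ 5).rep ∈ Wp (σ 3) (σ 4) := by
      have hle : Wp (σ 3) (σ 4)
          ≤ span F (Projectivization.rep '' (σ '' ↑({3, 4, 5} : Finset (Fin 6)))) := by
        apply span_mono
        rintro v (rfl | rfl)
        · exact ⟨σ 3, ⟨3, by simp, rfl⟩, rfl⟩
        · exact ⟨σ 4, ⟨4, by simp, rfl⟩, rfl⟩
      have heq := Submodule.eq_of_le_of_finrank_le hle (le_trans hcol345 (by rw [hW2]))
      rw [heq]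
      exact subset_span ⟨σ 5, ⟨5, by simp, rfl⟩, rfl⟩
    -- σ 3 is off the first line
    have h3W : (σ 3).rep ∉ Wp (σ 0) (σ 1) := by
      intro hmem
      have : IsCollinearSet F (σ '' ↑({0, 1, 3} : Finset (Fin 6))) := by
        apply isCollinear_of hW1.le
        rintro p ⟨i, hi, rfl⟩
        rw [Finset.mem_coe] at hi
        fin_cases hi
        · exact h0W
        · exact h1W
        · exact hmem
      exact absurd ((h3 {0, 1, 3} (by decide)).1 this) (by decide)
    -- σ 4 is off the plane spanned by the first line and σ 3
    have h4E : (σ 4).rep ∉ Wp (σ 0) (σ 1) ⊔ (F ∙ (σ 3).rep) := by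
      intro hmem
      have hrank : finrank F ↥(Wp (σ 0) (σ 1) ⊔ (F ∙ (σ 3).rep)) = 3 := by
        rw [finrank_sup_singleton h3W, hW1]
      have : IsCoplanarSet F (σ '' ↑({0, 1, 3, 4} : Finset (Fin 6))) := by
        apply isCoplanar_of hrank.le
        rintro p ⟨i, hi, rfl⟩
        rw [Finset.mem_coe] at hi
        fin_cases hi
        · exact Submodule.mem_sup_left h0W
        · exact Submodule.mem_sup_left h1W
        · exact Submodule.mem_sup_right (mem_span_singleton_self _)
        · exact hmem
      exact absurd ((h4 {0, 1, 3, 4} (by decide)).1 this) (by decide)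
    exact ⟨h10, ⟨h2W, h20, h21⟩, h3W, h4E, h5W, h53, h54⟩
  · rintro ⟨h10, ⟨h2W, h20, h21⟩, h3W, h4E, ⟨h5W, h53, h54⟩⟩
    set W1 := Wp (σ 0) (σ 1) with hW1def
    set W2 := Wp (σ 3) (σ 4) with hW2def
    set E3 := W1 ⊔ (F ∙ (σ 3).rep) with hE3def
    have hW1 : finrank F W1 = 2 := finrank_span_pair_rep h10
    have h0W : (σ 0).rep ∈ W1 := subset_span (by simp)
    have h1W : (σ 1).rep ∈ W1 := subset_span (by simp)
    have h3E : (σ 3).rep ∈ E3 := Submodule.mem_sup_right (mem_span_singleton_self _)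
    have h43 : σ 4 ≠ σ 3 := fun h => h4E ((congrArg Projectivization.rep h) ▸ h3E)
    have hW2 : finrank F W2 = 2 := finrank_span_pair_rep h43
    have h3W2 : (σ 3).rep ∈ W2 := subset_span (by simp)
    have h4W2 : (σ 4).rep ∈ W2 := subset_span (by simp)
    have hE3 : finrank F E3 = 3 := by rw [hE3def, finrank_sup_singleton h3W, hW1]
    have hsup : W1 ⊔ W2 = ⊤ := by
      have hEq : W1 ⊔ W2 = E3 ⊔ (F ∙ (σ 4).rep) := by
        rw [hE3def, hW2def, sup_assoc]
        congr 1
        exact span_insert _ _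
      apply Submodule.eq_top_of_finrank_eq
      rw [hEq, finrank_sup_singleton h4E, hE3, Module.finrank_fin_fun]
    have hdisj : W1 ⊓ W2 = ⊥ := by
      have h := Submodule.finrank_sup_add_finrank_inf_eq W1 W2
      rw [hsup, finrank_top, Module.finrank_fin_fun, hW1, hW2] at h
      exact Submodule.finrank_eq_zero.1 (by omega)
    have hdisj' : W2 ⊓ W1 = ⊥ := by rw [inf_comm]; exact hdisj
    have cross : ∀ x y : Projectivization F (Fin 4 → F),
        x.rep ∈ W1 → y.rep ∈ W2 → x ≠ y := by
      intro x y hx hy hxy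
      have : x.rep ∈ W1 ⊓ W2 := ⟨hx, hxy ▸ hy⟩
      rw [hdisj, Submodule.mem_bot] at this
      exact x.rep_nonzero this
    have h5W1 : (σ 5).rep ∉ W1 := by
      intro h
      have : (σ 5).rep ∈ W1 ⊓ W2 := ⟨h, h5W⟩
      rw [hdisj, Submodule.mem_bot] at this
      exact (σ 5).rep_nonzero this
    have h4W1 : (σ 4).rep ∉ W1 := fun h => h4E (Submodule.mem_sup_left h)
    have h0W2 : (σ 0).rep ∉ W2 := by
      intro h
      have : (σ 0).rep ∈ W1 ⊓ W2 := ⟨h0W, h⟩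
      rw [hdisj, Submodule.mem_bot] at this
      exact (σ 0).rep_nonzero this
    have h1W2 : (σ 1).rep ∉ W2 := by
      intro h
      have : (σ 1).rep ∈ W1 ⊓ W2 := ⟨h1W, h⟩
      rw [hdisj, Submodule.mem_bot] at this
      exact (σ 1).rep_nonzero this
    have h2W2 : (σ 2).rep ∉ W2 := by
      intro h
      have : (σ 2).rep ∈ W1 ⊓ W2 := ⟨h2W, h⟩
      rw [hdisj, Submodule.mem_bot] at this
      exact (σ 2).rep_nonzero this
    have n03 : σ 0 ≠ σ 3 := cross _ _ h0W h3W2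
    have n04 : σ 0 ≠ σ 4 := cross _ _ h0W h4W2
    have n05 : σ 0 ≠ σ 5 := cross _ _ h0W h5W
    have n13 : σ 1 ≠ σ 3 := cross _ _ h1W h3W2
    have n14 : σ 1 ≠ σ 4 := cross _ _ h1W h4W2
    have n15 : σ 1 ≠ σ 5 := cross _ _ h1W h5W
    have n23 : σ 2 ≠ σ 3 := cross _ _ h2W h3W2
    have n24 : σ 2 ≠ σ 4 := cross _ _ h2W h4W2
    have n25 : σ 2 ≠ σ 5 := cross _ _ h2W h5W
    have key : ∀ i j : Fin 6, i < j → σ i ≠ σ j := by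
      intro i j hij
      fin_cases i <;> fin_cases j <;>
        first
          | exact absurd hij (by decide)
          | exact h10.symm
          | exact h20.symm
          | exact h21.symm
          | exact h43.symm
          | exact h53.symm
          | exact h54.symm
          | exact n03
          | exact n04
          | exact n05
          | exact n13
          | exact n14
          | exact n15
          | exact n23
          | exact n24
          | exact n25
    have inj : Function.Injective σ := by
      intro a b hab
      by_contra hne
      rcases Ne.lt_or_gt hne with h | h
      · exact key a b h hab
      · exact key b a h hab.symm
    have hmemT : ∀ (T : Finset (Fin 6)) (i : Fin 6), i ∈ T → σ i ∈ σ '' ↑T :=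
      fun T i hi => ⟨i, hi, rfl⟩
    refine ⟨inj, ?_, ?_⟩
    · intro T hT
      have henum : T = {0,1,2} ∨ T = {0,1,3} ∨ T = {0,1,4} ∨ T = {0,1,5} ∨ T = {0,2,3} ∨
          T = {0,2,4} ∨ T = {0,2,5} ∨ T = {0,3,4} ∨ T = {0,3,5} ∨ T = {0,4,5} ∨
          T = {1,2,3} ∨ T = {1,2,4} ∨ T = {1,2,5} ∨ T = {1,3,4} ∨ T = {1,3,5} ∨
          T = {1,4,5} ∨ T = {2,3,4} ∨ T = {2,3,5} ∨ T = {2,4,5} ∨ T = {3,4,5} := by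
        revert hT; revert T; decide
      have memW1 : ∀ p ∈ σ '' ↑({0,1,2} : Finset (Fin 6)), Projectivization.rep p ∈ W1 := by
        rintro p ⟨i, hi, rfl⟩
        rw [Finset.mem_coe] at hi
        fin_cases hi
        · exact h0W
        · exact h1W
        · exact h2W
      have memW2 : ∀ p ∈ σ '' ↑({3,4,5} : Finset (Fin 6)), Projectivization.rep p ∈ W2 := by
        rintro p ⟨i, hi, rfl⟩
        rw [Finset.mem_coe] at hi
        fin_cases hi
        · exact h3W2
        · exact h4W2
        · exact h5W
      rcases henum with rfl|rfl|rfl|rfl|rfl|rfl|rfl|rfl|rfl|rfl|rfl|rfl|rfl|rfl|rfl|rfl|rfl|rfl|rfl|rfl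
      · exact iff_of_true (isCollinear_of hW1.le memW1) (by decide)
      · exact iff_of_false (not_isCollinear (hmemT _ 0 (by decide)) (hmemT _ 1 (by decide))
          (hmemT _ 3 (by decide)) hW1 hdisj h0W h1W h3W2 h10) (by decide)
      · exact iff_of_false (not_isCollinear (hmemT _ 0 (by decide)) (hmemT _ 1 (by decide))
          (hmemT _ 4 (by decide)) hW1 hdisj h0W h1W h4W2 h10) (by decide)
      · exact iff_of_false (not_isCollinear (hmemT _ 0 (by decide)) (hmemT _ 1 (by decide))
          (hmemT _ 5 (by decide)) hW1 hdisj h0W h1W h5W h10) (by decide)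
      · exact iff_of_false (not_isCollinear (hmemT _ 0 (by decide)) (hmemT _ 2 (by decide))
          (hmemT _ 3 (by decide)) hW1 hdisj h0W h2W h3W2 h20) (by decide)
      · exact iff_of_false (not_isCollinear (hmemT _ 0 (by decide)) (hmemT _ 2 (by decide))
          (hmemT _ 4 (by decide)) hW1 hdisj h0W h2W h4W2 h20) (by decide)
      · exact iff_of_false (not_isCollinear (hmemT _ 0 (by decide)) (hmemT _ 2 (by decide))
          (hmemT _ 5 (by decide)) hW1 hdisj h0W h2W h5W h20) (by decide)
      · exact iff_of_false (not_isCollinear (hmemT _ 3 (by decide)) (hmemT _ 4 (by decide))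
          (hmemT _ 0 (by decide)) hW2 hdisj' h3W2 h4W2 h0W h43) (by decide)
      · exact iff_of_false (not_isCollinear (hmemT _ 3 (by decide)) (hmemT _ 5 (by decide))
          (hmemT _ 0 (by decide)) hW2 hdisj' h3W2 h5W h0W h53) (by decide)
      · exact iff_of_false (not_isCollinear (hmemT _ 4 (by decide)) (hmemT _ 5 (by decide))
          (hmemT _ 0 (by decide)) hW2 hdisj' h4W2 h5W h0W h54) (by decide)
      · exact iff_of_false (not_isCollinear (hmemT _ 1 (by decide)) (hmemT _ 2 (by decide))
          (hmemT _ 3 (by decide)) hW1 hdisj h1W h2W h3W2 h21) (by decide)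
      · exact iff_of_false (not_isCollinear (hmemT _ 1 (by decide)) (hmemT _ 2 (by decide))
          (hmemT _ 4 (by decide)) hW1 hdisj h1W h2W h4W2 h21) (by decide)
      · exact iff_of_false (not_isCollinear (hmemT _ 1 (by decide)) (hmemT _ 2 (by decide))
          (hmemT _ 5 (by decide)) hW1 hdisj h1W h2W h5W h21) (by decide)
      · exact iff_of_false (not_isCollinear (hmemT _ 3 (by decide)) (hmemT _ 4 (by decide))
          (hmemT _ 1 (by decide)) hW2 hdisj' h3W2 h4W2 h1W h43) (by decide)
      · exact iff_of_false (not_isCollinear (hmemT _ 3 (by decide)) (hmemT _ 5 (by decide))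
          (hmemT _ 1 (by decide)) hW2 hdisj' h3W2 h5W h1W h53) (by decide)
      · exact iff_of_false (not_isCollinear (hmemT _ 4 (by decide)) (hmemT _ 5 (by decide))
          (hmemT _ 1 (by decide)) hW2 hdisj' h4W2 h5W h1W h54) (by decide)
      · exact iff_of_false (not_isCollinear (hmemT _ 3 (by decide)) (hmemT _ 4 (by decide))
          (hmemT _ 2 (by decide)) hW2 hdisj' h3W2 h4W2 h2W h43) (by decide)
      · exact iff_of_false (not_isCollinear (hmemT _ 3 (by decide)) (hmemT _ 5 (by decide))
          (hmemT _ 2 (by decide)) hW2 hdisj' h3W2 h5W h2W h53) (by decide)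
      · exact iff_of_false (not_isCollinear (hmemT _ 4 (by decide)) (hmemT _ 5 (by decide))
          (hmemT _ 2 (by decide)) hW2 hdisj' h4W2 h5W h2W h54) (by decide)
      · exact iff_of_true (isCollinear_of hW2.le memW2) (by decide)
    · intro S hS
      have henum : S = {0,1,2,3} ∨ S = {0,1,2,4} ∨ S = {0,1,2,5} ∨ S = {0,1,3,4} ∨
          S = {0,1,3,5} ∨ S = {0,1,4,5} ∨ S = {0,2,3,4} ∨ S = {0,2,3,5} ∨ S = {0,2,4,5} ∨
          S = {0,3,4,5} ∨ S = {1,2,3,4} ∨ S = {1,2,3,5} ∨ S = {1,2,4,5} ∨ S = {1,3,4,5} ∨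
          S = {2,3,4,5} := by
        revert hS; revert S; decide
      have plane1 : ∀ j : Fin 6, finrank F ↥(W1 ⊔ (F ∙ (σ j).rep)) ≤ 3 →
          (∀ p ∈ σ '' ↑({0,1,2,j} : Finset (Fin 6)),
            Projectivization.rep p ∈ W1 ⊔ (F ∙ (σ j).rep)) →
          IsCoplanarSet F (σ '' ↑({0,1,2,j} : Finset (Fin 6))) :=
        fun j h1 h2 => isCoplanar_of h1 h2
      rcases henum with rfl|rfl|rfl|rfl|rfl|rfl|rfl|rfl|rfl|rfl|rfl|rfl|rfl|rfl|rfl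
      · refine iff_of_true (isCoplanar_of (W := E3) hE3.le ?_) (by decide)
        rintro p ⟨i, hi, rfl⟩
        rw [Finset.mem_coe] at hi
        fin_cases hi
        · exact Submodule.mem_sup_left h0W
        · exact Submodule.mem_sup_left h1W
        · exact Submodule.mem_sup_left h2W
        · exact h3E
      · refine iff_of_true (isCoplanar_of (W := W1 ⊔ (F ∙ (σ 4).rep))
          (by rw [finrank_sup_singleton h4W1, hW1]) ?_) (by decide)
        rintro p ⟨i, hi, rfl⟩
        rw [Finset.mem_coe] at hi
        fin_cases hi
        · exact Submodule.mem_sup_left h0W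
        · exact Submodule.mem_sup_left h1W
        · exact Submodule.mem_sup_left h2W
        · exact Submodule.mem_sup_right (mem_span_singleton_self _)
      · refine iff_of_true (isCoplanar_of (W := W1 ⊔ (F ∙ (σ 5).rep))
          (by rw [finrank_sup_singleton h5W1, hW1]) ?_) (by decide)
        rintro p ⟨i, hi, rfl⟩
        rw [Finset.mem_coe] at hi
        fin_cases hi
        · exact Submodule.mem_sup_left h0W
        · exact Submodule.mem_sup_left h1W
        · exact Submodule.mem_sup_left h2W
        · exact Submodule.mem_sup_right (mem_span_singleton_self _)
      · exact iff_of_false (not_isCoplanar (hmemT _ 0 (by decide)) (hmemT _ 1 (by decide))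
          (hmemT _ 3 (by decide)) (hmemT _ 4 (by decide)) hW1 hW2 hsup h0W h1W h3W2 h4W2
          h10 h43) (by decide)
      · exact iff_of_false (not_isCoplanar (hmemT _ 0 (by decide)) (hmemT _ 1 (by decide))
          (hmemT _ 3 (by decide)) (hmemT _ 5 (by decide)) hW1 hW2 hsup h0W h1W h3W2 h5W
          h10 h53) (by decide)
      · exact iff_of_false (not_isCoplanar (hmemT _ 0 (by decide)) (hmemT _ 1 (by decide))
          (hmemT _ 4 (by decide)) (hmemT _ 5 (by decide)) hW1 hW2 hsup h0W h1W h4W2 h5W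
          h10 h54) (by decide)
      · exact iff_of_false (not_isCoplanar (hmemT _ 0 (by decide)) (hmemT _ 2 (by decide))
          (hmemT _ 3 (by decide)) (hmemT _ 4 (by decide)) hW1 hW2 hsup h0W h2W h3W2 h4W2
          h20 h43) (by decide)
      · exact iff_of_false (not_isCoplanar (hmemT _ 0 (by decide)) (hmemT _ 2 (by decide))
          (hmemT _ 3 (by decide)) (hmemT _ 5 (by decide)) hW1 hW2 hsup h0W h2W h3W2 h5W
          h20 h53) (by decide)
      · exact iff_of_false (not_isCoplanar (hmemT _ 0 (by decide)) (hmemT _ 2 (by decide))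
          (hmemT _ 4 (by decide)) (hmemT _ 5 (by decide)) hW1 hW2 hsup h0W h2W h4W2 h5W
          h20 h54) (by decide)
      · refine iff_of_true (isCoplanar_of (W := W2 ⊔ (F ∙ (σ 0).rep))
          (by rw [finrank_sup_singleton h0W2, hW2]) ?_) (by decide)
        rintro p ⟨i, hi, rfl⟩
        rw [Finset.mem_coe] at hi
        fin_cases hi
        · exact Submodule.mem_sup_right (mem_span_singleton_self _)
        · exact Submodule.mem_sup_left h3W2
        · exact Submodule.mem_sup_left h4W2
        · exact Submodule.mem_sup_left h5W
      · exact iff_of_false (not_isCoplanar (hmemT _ 1 (by decide)) (hmemT _ 2 (by decide))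
          (hmemT _ 3 (by decide)) (hmemT _ 4 (by decide)) hW1 hW2 hsup h1W h2W h3W2 h4W2
          h21 h43) (by decide)
      · exact iff_of_false (not_isCoplanar (hmemT _ 1 (by decide)) (hmemT _ 2 (by decide))
          (hmemT _ 3 (by decide)) (hmemT _ 5 (by decide)) hW1 hW2 hsup h1W h2W h3W2 h5W
          h21 h53) (by decide)
      · exact iff_of_false (not_isCoplanar (hmemT _ 1 (by decide)) (hmemT _ 2 (by decide))
          (hmemT _ 4 (by decide)) (hmemT _ 5 (by decide)) hW1 hW2 hsup h1W h2W h4W2 h5W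
          h21 h54) (by decide)
      · refine iff_of_true (isCoplanar_of (W := W2 ⊔ (F ∙ (σ 1).rep))
          (by rw [finrank_sup_singleton h1W2, hW2]) ?_) (by decide)
        rintro p ⟨i, hi, rfl⟩
        rw [Finset.mem_coe] at hi
        fin_cases hi
        · exact Submodule.mem_sup_right (mem_span_singleton_self _)
        · exact Submodule.mem_sup_left h3W2
        · exact Submodule.mem_sup_left h4W2
        · exact Submodule.mem_sup_left h5W
      · refine iff_of_true (isCoplanar_of (W := W2 ⊔ (F ∙ (σ 2).rep))
          (by rw [finrank_sup_singleton h2W2, hW2]) ?_) (by decide)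
        rintro p ⟨i, hi, rfl⟩
        rw [Finset.mem_coe] at hi
        fin_cases hi
        · exact Submodule.mem_sup_right (mem_span_singleton_self _)
        · exact Submodule.mem_sup_left h3W2
        · exact Submodule.mem_sup_left h4W2
        · exact Submodule.mem_sup_left h5W


variable (F) in
def Chain : Type _ :=
  Σ (p0 : Pt F) (p1 : {p : Pt F // p ≠ p0})
    (_p2 : {p : Pt F // p.rep ∈ Wp p0 p1.1 ∧ p ≠ p0 ∧ p ≠ p1.1})
    (p3 : {p : Pt F // p.rep ∉ Wp p0 p1.1})
    (p4 : {p : Pt F // p.rep ∉ Wp p0 p1.1 ⊔ (F ∙ p3.1.rep)}),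
    {p : Pt F // p.rep ∈ Wp p3.1 p4.1 ∧ p ≠ p3.1 ∧ p ≠ p4.1}

variable (F) in
def condEquiv : {σ : Fin 6 → Pt F // Cond σ} ≃ Chain F where
  toFun := fun ⟨σ, h⟩ => ⟨σ 0, ⟨σ 1, h.1⟩, ⟨σ 2, h.2.1⟩, ⟨σ 3, h.2.2.1⟩, ⟨σ 4, h.2.2.2.1⟩,
    ⟨σ 5, h.2.2.2.2⟩⟩
  invFun := fun ⟨p0, p1, p2, p3, p4, p5⟩ =>
    ⟨![p0, p1.1, p2.1, p3.1, p4.1, p5.1], ⟨p1.2, p2.2, p3.2, p4.2, p5.2⟩⟩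
  left_inv := fun ⟨σ, h⟩ => Subtype.ext (funext fun i => by fin_cases i <;> rfl)
  right_inv := fun ⟨p0, p1, p2, p3, p4, p5⟩ => rfl


variable [Fintype F]

lemma card_chain :
    Nat.card (Chain F) =
      (Fintype.card F ^ 3 + Fintype.card F ^ 2 + Fintype.card F + 1) *
        ((Fintype.card F ^ 3 + Fintype.card F ^ 2 + Fintype.card F) *
          ((Fintype.card F - 1) *
            ((Fintype.card F ^ 3 + Fintype.card F ^ 2) *
              (Fintype.card F ^ 3 * (Fintype.card F - 1))))) := by
  have hq2 : 2 ≤ (Fintype.card F) := Fintype.one_lt_card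
  have hV4 : finrank F (Fin 4 → F) = 4 := Module.finrank_fin_fun F
  have cA : Nat.card (Pt F) = (Fintype.card F) ^ 3 + (Fintype.card F) ^ 2 + (Fintype.card F) + 1 := card_proj_ambient hV4
  -- innermost fiber
  have step5 : ∀ (p0 : Pt F) (p1 : {p : Pt F // p ≠ p0})
      (p3 : {p : Pt F // p.rep ∉ Wp p0 p1.1})
      (p4 : {p : Pt F // p.rep ∉ Wp p0 p1.1 ⊔ (F ∙ p3.1.rep)}),
      Nat.card {p : Pt F // p.rep ∈ Wp p3.1 p4.1 ∧ p ≠ p3.1 ∧ p ≠ p4.1} = (Fintype.card F) - 1 := by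
    intro p0 p1 p3 p4
    have h34 : p3.1 ≠ p4.1 := by
      intro h
      exact p4.2 (h ▸ Submodule.mem_sup_right (mem_span_singleton_self _))
    have hW2 : finrank F (Wp p3.1 p4.1) = 2 := finrank_span_pair_rep (Ne.symm h34)
    exact card_line_remove_two hW2 (subset_span (by simp)) (subset_span (by simp)) h34
  have step4 : ∀ (p0 : Pt F) (p1 : {p : Pt F // p ≠ p0})
      (p3 : {p : Pt F // p.rep ∉ Wp p0 p1.1}),
      Nat.card {p : Pt F // p.rep ∉ Wp p0 p1.1 ⊔ (F ∙ p3.1.rep)} = (Fintype.card F) ^ 3 := by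
    intro p0 p1 p3
    have hW1 : finrank F (Wp p0 p1.1) = 2 := finrank_span_pair_rep p1.2
    have hE : finrank F ↥(Wp p0 p1.1 ⊔ (F ∙ p3.1.rep)) = 3 := by
      rw [finrank_sup_singleton p3.2, hW1]
    rw [card_compl, card_plane hE, cA]
    have : (Fintype.card F) ^ 2 + (Fintype.card F) + 1 ≤ (Fintype.card F) ^ 3 := by nlinarith
    omega
  have step3 : ∀ (p0 : Pt F) (p1 : {p : Pt F // p ≠ p0}),
      Nat.card {p : Pt F // p.rep ∉ Wp p0 p1.1} = (Fintype.card F) ^ 3 + (Fintype.card F) ^ 2 := by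
    intro p0 p1
    have hW1 : finrank F (Wp p0 p1.1) = 2 := finrank_span_pair_rep p1.2
    rw [card_compl, card_line hW1, cA]
    omega
  have step2 : ∀ (p0 : Pt F) (p1 : {p : Pt F // p ≠ p0}),
      Nat.card {p : Pt F // p.rep ∈ Wp p0 p1.1 ∧ p ≠ p0 ∧ p ≠ p1.1} = (Fintype.card F) - 1 := by
    intro p0 p1
    have hW1 : finrank F (Wp p0 p1.1) = 2 := finrank_span_pair_rep p1.2
    exact card_line_remove_two hW1 (subset_span (by simp)) (subset_span (by simp))
      (Ne.symm p1.2)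
  have step1 : ∀ p0 : Pt F, Nat.card {p : Pt F // p ≠ p0} = (Fintype.card F) ^ 3 + (Fintype.card F) ^ 2 + (Fintype.card F) := by
    intro p0
    rw [card_ne_subtype, cA]
    omega
  refine Eq.trans (ncard_sigma_const fun p0 => ?_) (by rw [cA])
  refine Eq.trans (ncard_sigma_const fun p1 => ?_) (by rw [step1])
  refine Eq.trans (ncard_sigma_const fun p2 => ?_) (by rw [step2])
  refine Eq.trans (ncard_sigma_const fun p3 => ?_) (by rw [step3])
  refine Eq.trans (ncard_sigma_const fun p4 => ?_) (by rw [step4])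
  exact step5 p0 p1 p3 p4

end StrongRealAux

/-- The number of strong realizations in `ℙ³(𝔽_q)` of the 6-point configuration with full
lines `{{0,1,2},{3,4,5}}` and full planes
`{{0,1,2,3},{0,1,2,4},{0,1,2,5},{0,3,4,5},{1,3,4,5},{2,3,4,5}}` is
`A₆(4,q) = (q²+q+1)(q²+1)(q+1)²(q−1)²q⁶`. -/
theorem count_strong_realizations_A6 (q : ℕ) (F : Type*) [Field F] [Fintype F]
    (hq : Fintype.card F = q) :
    (Nat.card {σ : Fin 6 → Projectivization F (Fin 4 → F) //
        IsStrongRealization F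
          ({{0, 1, 2}, {3, 4, 5}} : Finset (Finset (Fin 6)))
          ({{0, 1, 2, 3}, {0, 1, 2, 4}, {0, 1, 2, 5},
            {0, 3, 4, 5}, {1, 3, 4, 5}, {2, 3, 4, 5}} : Finset (Finset (Fin 6))) σ} : ℤ) =
      ((q : ℤ) ^ 2 + q + 1) * ((q : ℤ) ^ 2 + 1) * ((q : ℤ) + 1) ^ 2 * ((q : ℤ) - 1) ^ 2 *
        (q : ℤ) ^ 6 := by
  classical
  subst hq
  have e := (Equiv.subtypeEquivRight
    (fun σ => StrongRealAux.realization_iff_cond (F := F) σ)).trans (StrongRealAux.condEquiv F)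
  rw [Nat.card_congr e, StrongRealAux.card_chain]
  have h1 : 1 ≤ Fintype.card F := le_of_lt Fintype.one_lt_card
  push_cast [Nat.cast_sub h1]
  ring
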